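/- In the coupon collector's model with n coupon types, where at each round a coupon type is chosen uniformly at random among the n types independently of previous rounds, let N_t denote the number of distinct coupon types obtained after t rounds. Fix integers k, t, n ≥ 1 with 1/k ≥ 1/t + 1/n. Then P(N_t < k) ≤ (t/k)^k (n/k − n/t)^{−(t−k)}. In particular, P(N_t < k) ≤ n^{−α} whenever α + k ≤ (1−β)t and t ≤ n^{β/2} for some α > 0 and β ∈ (0,1). -/

import Mathlib

open Finset
open scoped Classical

noncomputable section

set_option maxHeartbeats 800000

/-- Probability of an event in the coupon collector's model: `t` coupons, each chosen
uniformly at random among `n` types, independently. -/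
def couponProb (n t : ℕ) (A : (Fin t → Fin n) → Prop) : ℝ :=
  ((Finset.univ.filter fun ω : Fin t → Fin n => A ω).card : ℝ) / (n : ℝ) ^ t

/-- The number `N_t` of distinct coupon types collected. -/
def distinctCount {n t : ℕ} (ω : Fin t → Fin n) : ℕ := (Finset.univ.image ω).card

/-- The first round at which the coupon type `ω i` appears. -/
noncomputable def firstOcc {n t : ℕ} (ω : Fin t → Fin n) (i : Fin t) : Fin t :=
  (Finset.univ.filter (fun j => ω j = ω i)).min' ⟨i, by simp⟩

lemma firstOcc_apply {n t : ℕ} (ω : Fin t → Fin n) (i : Fin t) :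
    ω (firstOcc ω i) = ω i := by
  have := Finset.min'_mem (Finset.univ.filter (fun j => ω j = ω i)) ⟨i, by simp⟩
  simpa [firstOcc] using (Finset.mem_filter.1 this).2

lemma firstOcc_congr {n t : ℕ} (ω : Fin t → Fin n) {i j : Fin t} (hij : ω i = ω j) :
    firstOcc ω i = firstOcc ω j := by
  simp only [firstOcc, hij]

lemma card_firstOcc_le {n t : ℕ} (ω : Fin t → Fin n) :
    (Finset.univ.image (firstOcc ω)).card ≤ distinctCount ω := by
  classical
  have hinj : Set.InjOn ω (Finset.univ.image (firstOcc ω)) := by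
    intro a ha b hb hab
    simp only [coe_image, Set.mem_image] at ha hb
    obtain ⟨i, -, rfl⟩ := ha
    obtain ⟨j, -, rfl⟩ := hb
    rw [firstOcc_apply ω i, firstOcc_apply ω j] at hab
    exact firstOcc_congr ω hab
  calc (Finset.univ.image (firstOcc ω)).card
      = ((Finset.univ.image (firstOcc ω)).image ω).card :=
        (Finset.card_image_of_injOn hinj).symm
    _ ≤ (Finset.univ.image ω).card := Finset.card_le_card
        (Finset.image_subset_image (Finset.subset_univ _))

/-- Counting bound: a sample with fewer than `k` distinct coupons is determined by a
`k`-set of rounds (containing all first occurrences), the values at these rounds, and,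
for every other round, the first-occurrence round of its value. -/
lemma coupon_count_le (n t k : ℕ) (hk : 1 ≤ k) (hkt : k ≤ t) :
    (univ.filter fun ω : Fin t → Fin n => distinctCount ω < k).card ≤
      t.choose k * (n ^ k * k ^ (t - k)) := by
  classical
  have hsub : (univ.filter fun ω : Fin t → Fin n => distinctCount ω < k) ⊆
      (powersetCard k (univ : Finset (Fin t))).biUnion
        (fun S => univ.filter fun ω : Fin t → Fin n =>
          Finset.univ.image (firstOcc ω) ⊆ S) := by
    intro ω hω
    rw [mem_filter] at hω
    obtain ⟨S, hS1, hS2, hS3⟩ := Finset.exists_subsuperset_card_eq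
      (Finset.subset_univ (Finset.univ.image (firstOcc ω)))
      (le_trans (card_firstOcc_le ω) (le_of_lt hω.2)) (by simpa using hkt)
    exact mem_biUnion.2 ⟨S, mem_powersetCard.2 ⟨hS2, hS3⟩, mem_filter.2 ⟨mem_univ _, hS1⟩⟩
  refine le_trans (card_le_card hsub) (le_trans (card_biUnion_le) ?_)
  have hcard : ∀ S ∈ powersetCard k (univ : Finset (Fin t)),
      (univ.filter fun ω : Fin t → Fin n =>
        Finset.univ.image (firstOcc ω) ⊆ S).card ≤ n ^ k * k ^ (t - k) := by
    intro S hS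
    rw [mem_powersetCard] at hS
    have hScard : S.card = k := hS.2
    have hSne : S.Nonempty := Finset.card_pos.1 (hScard ▸ hk)
    have hmem0 : S.min' hSne ∈ S := Finset.min'_mem _ _
    set Φ : (Fin t → Fin n) → ((↥S → Fin n) × (↥(Sᶜ) → ↥S)) := fun ω =>
      (fun s : ↥S => ω s, fun s : ↥(Sᶜ) =>
        if h : firstOcc ω (s : Fin t) ∈ S then ⟨firstOcc ω (s : Fin t), h⟩
        else ⟨S.min' hSne, hmem0⟩) with hΦ
    have key : (univ.filter fun ω : Fin t → Fin n =>
        Finset.univ.image (firstOcc ω) ⊆ S).card ≤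
        Fintype.card ((↥S → Fin n) × (↥(Sᶜ) → ↥S)) := by
      rw [← Finset.card_univ]
      apply Finset.card_le_card_of_injOn Φ (fun _ _ => mem_univ _)
      intro ω hω ω' hω' heq
      rw [Finset.mem_coe, mem_filter] at hω hω'
      have hfo : ∀ i, firstOcc ω i ∈ S := fun i => hω.2 (mem_image_of_mem _ (mem_univ i))
      have hfo' : ∀ i, firstOcc ω' i ∈ S := fun i => hω'.2 (mem_image_of_mem _ (mem_univ i))
      have h1 : ∀ s : ↥S, ω s = ω' s := fun s => congrFun (congrArg Prod.fst heq) s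
      funext i
      by_cases hi : i ∈ S
      · exact h1 ⟨i, hi⟩
      · have h2 := congrFun (congrArg Prod.snd heq) ⟨i, by simpa using hi⟩
        simp only [hΦ, dif_pos (hfo i), dif_pos (hfo' i)] at h2
        have h3 : firstOcc ω i = firstOcc ω' i := congrArg Subtype.val h2
        calc ω i = ω (firstOcc ω i) := (firstOcc_apply ω i).symm
          _ = ω' (firstOcc ω i) := h1 ⟨_, hfo i⟩
          _ = ω' (firstOcc ω' i) := by rw [h3]
          _ = ω' i := firstOcc_apply ω' i
    refine key.trans ?_
    simp [Fintype.card_fun, hScard, Finset.card_compl]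
  calc ∑ S ∈ powersetCard k (univ : Finset (Fin t)),
        (univ.filter fun ω : Fin t → Fin n =>
          Finset.univ.image (firstOcc ω) ⊆ S).card
      ≤ ∑ _S ∈ powersetCard k (univ : Finset (Fin t)), (n ^ k * k ^ (t - k)) :=
        Finset.sum_le_sum hcard
    _ = t.choose k * (n ^ k * k ^ (t - k)) := by
        rw [Finset.sum_const, smul_eq_mul, Finset.card_powersetCard, card_univ,
          Fintype.card_fin]

/-- Entropy-type bound on binomial coefficients, from the binomial theorem. -/
lemma coupon_choose_bound (t k : ℕ) (hkt : k ≤ t) :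
    t.choose k * (k ^ k * (t - k) ^ (t - k)) ≤ t ^ t := by
  have h := Finset.single_le_sum (f := fun i => k ^ i * (t - k) ^ (t - i) * t.choose i)
    (fun i _ => Nat.zero_le _) (Finset.mem_range.2 (Nat.lt_succ_of_le hkt))
  calc t.choose k * (k ^ k * (t - k) ^ (t - k))
      = k ^ k * (t - k) ^ (t - k) * t.choose k := by ring
    _ ≤ ∑ i ∈ Finset.range (t + 1), k ^ i * (t - k) ^ (t - i) * t.choose i := h
    _ = (k + (t - k)) ^ t := (add_pow k (t - k) t).symm
    _ = t ^ t := by rw [Nat.add_sub_cancel' hkt]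

/-- **Lemma (coupon collection).**
Fix `k, t, n ≥ 1` with `1/k ≥ 1/t + 1/n`. Then
`P(N_t < k) ≤ (t/k)^k (n/k - n/t)^{-(t-k)}`; in particular `P(N_t < k) ≤ n^{-α}`
whenever `α + k ≤ (1-β) t` and `t ≤ n^{β/2}` for some `α > 0` and `β ∈ (0,1)`. -/
theorem coupon_collection
    (n t k : ℕ) (hn : 1 ≤ n) (ht : 1 ≤ t) (hk : 1 ≤ k)
    (h : (1 : ℝ) / t + 1 / n ≤ 1 / k) :
    couponProb n t (fun ω => distinctCount ω < k) ≤
        ((t : ℝ) / k) ^ k * (((n : ℝ) / k - (n : ℝ) / t) ^ (t - k))⁻¹ ∧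
      ∀ α β : ℝ, 0 < α → 0 < β → β < 1 →
        α + k ≤ (1 - β) * t → (t : ℝ) ≤ (n : ℝ) ^ (β / 2) →
          couponProb n t (fun ω => distinctCount ω < k) ≤ (n : ℝ) ^ (-α) := by
  have hT1 : (1:ℝ) ≤ (t:ℝ) := by exact_mod_cast ht
  have hN1 : (1:ℝ) ≤ (n:ℝ) := by exact_mod_cast hn
  have hK1 : (1:ℝ) ≤ (k:ℝ) := by exact_mod_cast hk
  have hT0 : (0:ℝ) < t := by linarith
  have hN0 : (0:ℝ) < n := by linarith
  have hK0 : (0:ℝ) < k := by linarith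
  have hsum : ((n:ℝ) + t)/((t:ℝ)*n) ≤ 1/k := by
    rw [div_add_div _ _ (ne_of_gt hT0) (ne_of_gt hN0)] at h
    convert h using 2 <;> ring
  have hcross : ((n:ℝ) + t) * k ≤ 1 * ((t:ℝ)*n) :=
    (div_le_div_iff₀ (by positivity) hK0).1 hsum
  have hKT : (k:ℝ) < (t:ℝ) := by nlinarith
  have hktn : k < t := by exact_mod_cast hKT
  have hkt : k ≤ t := hktn.le
  have hN1' : (1:ℝ) < (n:ℝ) := by
    rcases eq_or_lt_of_le hN1 with he | h2
    · exfalso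
      have h1k : 1/(k:ℝ) ≤ 1 := by rw [div_le_one hK0]; exact hK1
      have h1t : 0 < 1/(t:ℝ) := by positivity
      rw [← he] at h; linarith
    · exact h2
  set d : ℕ := t - k with hd
  have hdR : (d : ℝ) = (t:ℝ) - k := by rw [hd]; push_cast [Nat.cast_sub hkt]; ring
  have hd1 : 1 ≤ d := by omega
  have hdR0 : (0:ℝ) < (d:ℝ) := by rw [hdR]; linarith
  have hD0 : (0:ℝ) < (n:ℝ)/k - (n:ℝ)/t := by
    rw [div_sub_div _ _ (ne_of_gt hK0) (ne_of_gt hT0)]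
    apply div_pos (by nlinarith) (by positivity)
  have hcard : (((univ.filter fun ω : Fin t → Fin n => distinctCount ω < k).card : ℝ)) ≤
      (t.choose k : ℝ) * ((n:ℝ)^k * (k:ℝ)^d) := by
    exact_mod_cast coupon_count_le n t k hk hkt
  have hchoose : (t.choose k : ℝ) * ((k:ℝ)^k * (d:ℝ)^d) ≤ (t:ℝ)^t := by
    exact_mod_cast coupon_choose_bound t k hkt
  have hTt : (t:ℝ)^k * (t:ℝ)^d = (t:ℝ)^t := by rw [← pow_add]; congr 1; omega
  have hNt : (n:ℝ)^t = (n:ℝ)^k * (n:ℝ)^d := by rw [← pow_add]; congr 1; omega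
  have hD : (n:ℝ)/k - (n:ℝ)/t = (n:ℝ) * (d:ℝ) / ((k:ℝ) * t) := by
    rw [hdR]; field_simp
  have hRHSeq : ((t : ℝ) / k) ^ k * (((n : ℝ) / k - (n : ℝ) / t) ^ d)⁻¹ =
      ((t:ℝ)^t * (k:ℝ)^d) / ((k:ℝ)^k * (d:ℝ)^d * (n:ℝ)^d) := by
    rw [hD, div_pow, div_pow, mul_pow, mul_pow]
    rw [← hTt]
    field_simp
  have hfirst : couponProb n t (fun ω => distinctCount ω < k) ≤
      ((t : ℝ) / k) ^ k * (((n : ℝ) / k - (n : ℝ) / t) ^ d)⁻¹ := by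
    have hcoupon : couponProb n t (fun ω => distinctCount ω < k) =
        ((univ.filter fun ω : Fin t → Fin n => distinctCount ω < k).card : ℝ) / (n:ℝ)^t := by
      rw [couponProb]; congr 1; rw [Finset.filter_congr_decidable]
    rw [hcoupon, hRHSeq, hNt]
    calc (((univ.filter fun ω : Fin t → Fin n => distinctCount ω < k).card : ℝ))
          / ((n:ℝ)^k * (n:ℝ)^d)
        ≤ ((t.choose k : ℝ) * ((n:ℝ)^k * (k:ℝ)^d)) / ((n:ℝ)^k * (n:ℝ)^d) := by
          gcongr
      _ ≤ ((t:ℝ)^t * (k:ℝ)^d) / ((k:ℝ)^k * (d:ℝ)^d * (n:ℝ)^d) := by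
          rw [div_le_div_iff₀ (by positivity) (by positivity)]
          have hmul := mul_le_mul_of_nonneg_right hchoose
            (show (0:ℝ) ≤ (k:ℝ)^d * (n:ℝ)^k * (n:ℝ)^d by positivity)
          calc (t.choose k : ℝ) * ((n:ℝ)^k * (k:ℝ)^d) * ((k:ℝ)^k * (d:ℝ)^d * (n:ℝ)^d)
              = (t.choose k : ℝ) * ((k:ℝ)^k * (d:ℝ)^d) * ((k:ℝ)^d * (n:ℝ)^k * (n:ℝ)^d) := by
                ring
            _ ≤ (t:ℝ)^t * ((k:ℝ)^d * (n:ℝ)^k * (n:ℝ)^d) := hmul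
            _ = (t:ℝ)^t * (k:ℝ)^d * ((n:ℝ)^k * (n:ℝ)^d) := by ring
  refine ⟨hfirst, ?_⟩
  intro α β hα hβ0 hβ1 hαβ htn
  refine le_trans hfirst ?_
  have hTK : (t:ℝ)/k ≤ (t:ℝ) := by
    calc (t:ℝ)/k ≤ (t:ℝ)/1 := by gcongr
      _ = (t:ℝ) := div_one _
  have h1 : ((t:ℝ)/k)^k ≤ ((n:ℝ)^(β/2))^k :=
    pow_le_pow_left₀ (by positivity) (le_trans hTK htn) k
  have h1' : ((n:ℝ)^(β/2))^k = (n:ℝ)^(β/2 * k) := by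
    rw [← Real.rpow_natCast ((n:ℝ)^(β/2)) k, ← Real.rpow_mul (le_of_lt hN0)]
  have hbase : ((n:ℝ)/k - (n:ℝ)/t)⁻¹ ≤ (n:ℝ)^(β - 1) := by
    rw [hD, inv_div]
    have step1 : (k:ℝ)*t/((n:ℝ)*d) ≤ (t:ℝ)*t/(n:ℝ) := by
      rw [div_le_div_iff₀ (by positivity) hN0]
      have hdR1 : (1:ℝ) ≤ (d:ℝ) := by exact_mod_cast hd1
      have hktd : (k:ℝ) ≤ (t:ℝ)*d := by nlinarith [mul_le_mul_of_nonneg_left hdR1 hT0.le]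
      nlinarith [mul_le_mul_of_nonneg_right hktd (show (0:ℝ) ≤ (t:ℝ)*n by positivity)]
    have step2 : (t:ℝ)*t/(n:ℝ) ≤ (n:ℝ)^(β-1) := by
      have ht2 : (t:ℝ)*t ≤ (n:ℝ)^β := by
        have := mul_le_mul htn htn (by linarith) (by positivity)
        calc (t:ℝ)*t ≤ (n:ℝ)^(β/2) * (n:ℝ)^(β/2) := this
          _ = (n:ℝ)^β := by rw [← Real.rpow_add hN0]; ring_nf
      rw [div_le_iff₀ hN0, show β - 1 = β + (-1) from by ring, Real.rpow_add hN0,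
        Real.rpow_neg_one]
      calc (t:ℝ)*t ≤ (n:ℝ)^β := ht2
        _ = (n:ℝ)^β * (n:ℝ)⁻¹ * n := by field_simp
    exact le_trans step1 step2
  have h2 : (((n:ℝ)/k - (n:ℝ)/t)^d)⁻¹ ≤ ((n:ℝ)^(β-1))^d := by
    rw [← inv_pow]
    exact pow_le_pow_left₀ (by positivity) hbase d
  have h2' : ((n:ℝ)^(β-1))^d = (n:ℝ)^((β-1) * d) := by
    rw [← Real.rpow_natCast ((n:ℝ)^(β-1)) d, ← Real.rpow_mul (le_of_lt hN0)]
  calc ((t : ℝ) / k) ^ k * (((n : ℝ) / k - (n : ℝ) / t) ^ d)⁻¹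
      ≤ (n:ℝ)^(β/2 * k) * (n:ℝ)^((β-1) * d) := by
        apply mul_le_mul (h1' ▸ h1) (h2' ▸ h2) (by positivity) (by positivity)
    _ = (n:ℝ)^(β/2 * k + (β-1) * d) := (Real.rpow_add hN0 _ _).symm
    _ ≤ (n:ℝ)^(-α) := by
        apply Real.rpow_le_rpow_of_exponent_le hN1
        rw [hdR]; nlinarith

end
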